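/- Let P(X,Y) = X³Y² + X²Y³ + 1 − 5XY + 5X²Y² ∈ ℂ[X,Y], φ = (1+√5)/2 and φ̃ = (1−√5)/2. Then the points q₁ = (−φ,−φ) and q₂ = (−φ̃,−φ̃) are singular points of the curve P = 0: P(−φ,−φ) = 0, ∂P/∂X(−φ,−φ) = 0, ∂P/∂Y(−φ,−φ) = 0, and likewise P(−φ̃,−φ̃) = ∂P/∂X(−φ̃,−φ̃) = ∂P/∂Y(−φ̃,−φ̃) = 0. -/
import Mathlib

open MvPolynomial

/-- P(X,Y) = X³Y² + X²Y³ + 1 − 5XY + 5X²Y², with X = X 0 and Y = X 1. -/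
noncomputable def Pcon : MvPolynomial (Fin 2) ℂ :=
  X 0 ^ 3 * X 1 ^ 2 + X 0 ^ 2 * X 1 ^ 3 + 1 - 5 * X 0 * X 1 + 5 * X 0 ^ 2 * X 1 ^ 2

/-- The golden ratio φ = (1+√5)/2, as a complex number. -/
noncomputable def goldφ : ℂ := (((1 + Real.sqrt 5) / 2 : ℝ) : ℂ)

/-- The conjugate golden ratio φ̃ = (1−√5)/2, as a complex number. -/
noncomputable def goldφ' : ℂ := (((1 - Real.sqrt 5) / 2 : ℝ) : ℂ)

lemma pderiv_five (i : Fin 2) : pderiv i (5 : MvPolynomial (Fin 2) ℂ) = 0 := by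
  rw [show (5 : MvPolynomial (Fin 2) ℂ) = C 5 from (map_ofNat C 5).symm, pderiv_C]

lemma key (t : ℂ) (h : t ^ 2 = t + 1) :
    eval (fun _ : Fin 2 => -t) Pcon = 0 ∧
    eval (fun _ : Fin 2 => -t) (pderiv 0 Pcon) = 0 ∧
    eval (fun _ : Fin 2 => -t) (pderiv 1 Pcon) = 0 := by
  refine ⟨?_, ?_, ?_⟩ <;>
  · simp [Pcon, pderiv_mul, pderiv_pow, pderiv_X, pderiv_five,
      Pi.single_apply]
    ring_nf
    first
    | linear_combination (-2*t^3 + 3*t^2 + t - 1) * h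
    | linear_combination (5*t^2 - 5*t) * h

lemma goldsq_aux : goldφ ^ 2 = goldφ + 1 := by
  have h5 : Real.sqrt 5 ^ 2 = 5 := Real.sq_sqrt (by norm_num)
  unfold goldφ
  push_cast
  have : ((Real.sqrt 5 : ℝ) : ℂ) ^ 2 = 5 := by exact_mod_cast congrArg Complex.ofReal h5
  linear_combination this / 4

lemma goldsq'_aux : goldφ' ^ 2 = goldφ' + 1 := by
  have h5 : Real.sqrt 5 ^ 2 = 5 := Real.sq_sqrt (by norm_num)
  unfold goldφ'
  push_cast
  have : ((Real.sqrt 5 : ℝ) : ℂ) ^ 2 = 5 := by exact_mod_cast congrArg Complex.ofReal h5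
  linear_combination this / 4

theorem stmt_8 :
    eval (fun _ : Fin 2 => -goldφ) Pcon = 0 ∧
    eval (fun _ : Fin 2 => -goldφ) (pderiv 0 Pcon) = 0 ∧
    eval (fun _ : Fin 2 => -goldφ) (pderiv 1 Pcon) = 0 ∧
    eval (fun _ : Fin 2 => -goldφ') Pcon = 0 ∧
    eval (fun _ : Fin 2 => -goldφ') (pderiv 0 Pcon) = 0 ∧
    eval (fun _ : Fin 2 => -goldφ') (pderiv 1 Pcon) = 0 := by
  obtain ⟨a1, a2, a3⟩ := key goldφ goldsq_aux
  obtain ⟨b1, b2, b3⟩ := key goldφ' goldsq'_aux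
  exact ⟨a1, a2, a3, b1, b2, b3⟩
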